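/- (Theorem 2.5, symmetric identity with power sums) Let q be a real number with 0 < q < 1, let α > 0 be real, let h be a positive integer, let x ≥ 0 be real, let a and b be odd positive integers, and let m be a positive integer. Then [2]_{q^b} · ∑_{i=0}^{m} C(m,i) · [a]_{q^α}^{i-1} · [b]_{q^α}^{m-i} · G̃_{i,q^a}^{(α,h)}(bx) · S̃^{(α)}_{m-i : q^b, h+α(i-1)}(a) = [2]_{q^a} · ∑_{i=0}^{m} C(m,i) · [b]_{q^α}^{i-1} · [a]_{q^α}^{m-i} · G̃_{i,q^b}^{(α,h)}(ax) · S̃^{(α)}_{m-i : q^a, h+α(i-1)}(b), where C(m,i) denotes the binomial coefficient. (In the terms i = 0 the weighted (h,q)-Genocchi factor vanishes, so the negative powers [a]_{q^α}^{-1}, [b]_{q^α}^{-1} and the exponents h - α are harmless.) -/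

import Mathlib

/-- The `q`-number `[x]_q = (1 - q^x)/(1 - q)` (real exponent, via `rpow`). -/
noncomputable def qnum (q x : ℝ) : ℝ := (1 - q ^ x) / (1 - q)

/-- The weighted `(h,q)`-Genocchi polynomial
`G̃_{n,q}^{(α,h)}(x) = n·[2]_q·∑_{m≥0} (-1)^m q^{mh} [m+x]_{q^α}^{n-1}`
(for `n = 0` the prefactor `n` makes it `0`). -/
noncomputable def hqGenocchi (q α : ℝ) (h n : ℕ) (x : ℝ) : ℝ :=
  (n : ℝ) * qnum q 2 *
    ∑' m : ℕ, (-1 : ℝ) ^ m * q ^ (m * h) * (qnum (q ^ α) ((m : ℝ) + x)) ^ (n - 1)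

/-- The alternating weighted power sum
`S̃^{(α)}_{m : q, w}(a) = ∑_{j=0}^{a-1} (-1)^j q^{jw} [j]_{q^α}^m` (real weight exponent `w`). -/
noncomputable def hqPowSum (q α w : ℝ) (m a : ℕ) : ℝ :=
  ∑ j ∈ Finset.range a, (-1 : ℝ) ^ j * q ^ ((j : ℝ) * w) * (qnum (q ^ α) (j : ℝ)) ^ m

open Real Finset

-- helpers (already checked)
lemma qnum_nonneg {P y : ℝ} (hP0 : 0 < P) (hP1 : P < 1) (hy : 0 ≤ y) : 0 ≤ qnum P y := by
  unfold qnum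
  have h1 : P ^ y ≤ 1 := Real.rpow_le_one hP0.le hP1.le hy
  have := Real.rpow_nonneg hP0.le y
  apply div_nonneg <;> linarith

lemma qnum_le {P y : ℝ} (hP0 : 0 < P) (hP1 : P < 1) : qnum P y ≤ 1 / (1 - P) := by
  unfold qnum
  have := Real.rpow_nonneg hP0.le y
  gcongr
  · linarith

lemma qnum_pos {P y : ℝ} (hP0 : 0 < P) (hP1 : P < 1) (hy : 0 < y) : 0 < qnum P y := by
  unfold qnum
  have h1 : P ^ y < 1 := Real.rpow_lt_one hP0.le hP1 hy
  apply div_pos <;> linarith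

lemma qnum_add {P : ℝ} (hP : 0 < P) (u v : ℝ) :
    qnum P (u + v) = qnum P u + P ^ u * qnum P v := by
  unfold qnum
  rw [Real.rpow_add hP]
  ring

lemma qnum_base_rpow {P : ℝ} (hP0 : 0 < P) (hP1 : P < 1) {c : ℝ} (hc : 0 < c) (y : ℝ) :
    qnum (P ^ c) y = qnum P (c * y) / qnum P c := by
  have h1 : (1 : ℝ) - P ≠ 0 := by linarith
  have h2 : P ^ c < 1 := Real.rpow_lt_one hP0.le hP1 hc
  have h3 : (1 : ℝ) - P ^ c ≠ 0 := by linarith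
  unfold qnum
  rw [← Real.rpow_mul hP0.le]
  field_simp

lemma natpow_rpow {q : ℝ} (hq : 0 ≤ q) (c : ℕ) (y : ℝ) :
    ((q ^ c : ℝ)) ^ y = q ^ ((c : ℝ) * y) := by
  rw [← Real.rpow_natCast q c, ← Real.rpow_mul hq]

lemma qnum_natpow_rpow {q α : ℝ} (hq0 : 0 < q) (hq1 : q < 1) (hα : 0 < α) {c : ℕ} (hc : 0 < c)
    (y : ℝ) : qnum (((q ^ c : ℝ)) ^ α) y = qnum (q ^ α) ((c : ℝ) * y) / qnum (q ^ α) (c : ℝ) := by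
  have h1 : ((q ^ c : ℝ)) ^ α = (q ^ α) ^ ((c : ℕ) : ℝ) := by
    rw [natpow_rpow hq0.le, ← Real.rpow_mul hq0.le]
    ring_nf
  rw [h1]
  exact qnum_base_rpow (Real.rpow_pos_of_pos hq0 α) (Real.rpow_lt_one hq0.le hq1 hα)
    (by exact_mod_cast hc) y

lemma summable_bd {r C : ℝ} (hr0 : 0 ≤ r) (hr1 : r < 1) {f : ℕ → ℝ}
    (hf : ∀ n, |f n| ≤ C * r ^ n) : Summable f :=
  Summable.of_norm_bounded ((summable_geometric_of_lt_one hr0 hr1).mul_left C) hf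

lemma binom_deriv (X Y : ℝ) (m : ℕ) :
    ∑ i ∈ range (m + 1), (m.choose i : ℝ) * i * X ^ (i - 1) * Y ^ (m - i)
      = m * (X + Y) ^ (m - 1) := by
  cases m with
  | zero => simp
  | succ m' =>
    rw [Finset.sum_range_succ']
    simp only [Nat.cast_zero, mul_zero, zero_mul, add_zero, Nat.choose_zero_right]
    have key : ∀ k ∈ range (m' + 1),
        ((m' + 1).choose (k + 1) : ℝ) * ((k + 1 : ℕ) : ℝ) * X ^ (k + 1 - 1) * Y ^ (m' + 1 - (k + 1))
          = ((m' + 1 : ℕ) : ℝ) * (X ^ k * Y ^ (m' - k) * (m'.choose k : ℝ)) := by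
      intro k _
      have h2 : ((m' + 1) * m'.choose k : ℕ) = ((m' + 1).choose (k + 1) * (k + 1) : ℕ) :=
        Nat.add_one_mul_choose_eq m' k
      have h3 : ((m' + 1).choose (k + 1) : ℝ) * ((k + 1 : ℕ) : ℝ)
          = ((m' + 1 : ℕ) : ℝ) * (m'.choose k : ℝ) := by exact_mod_cast h2.symm
      rw [h3]
      simp only [Nat.add_sub_cancel, Nat.succ_sub_succ, Nat.sub_zero]
      ring
    rw [Finset.sum_congr rfl key, ← Finset.mul_sum, ← add_pow]
    push_cast
    ring_nf

/-- the double-indexed summand after combining Genocchi series with power sum -/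
noncomputable def wfun (q α x : ℝ) (h a b m : ℕ) (i n : ℕ) : ℝ :=
  ∑ j ∈ Finset.range a,
    (m.choose i : ℝ) * i * (-1 : ℝ) ^ (n + j) * q ^ ((a * n + b * j) * h) *
      ((q ^ α) ^ (((b * j : ℕ) : ℝ)) *
        qnum (q ^ α) (((a * n : ℕ) : ℝ) + ((a * b : ℕ) : ℝ) * x)) ^ (i - 1) *
      (qnum (q ^ α) (((b * j : ℕ) : ℝ))) ^ (m - i)

/-- the summand after the binomial-derivative collapse -/
noncomputable def gfun (q α x : ℝ) (h a b m : ℕ) (n : ℕ) : ℝ :=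
  ∑ j ∈ Finset.range a,
    (-1 : ℝ) ^ (n + j) * q ^ ((a * n + b * j) * h) *
      (qnum (q ^ α) (((a * n + b * j : ℕ) : ℝ) + ((a * b : ℕ) : ℝ) * x)) ^ (m - 1)

lemma claim1 (q α x : ℝ) (hq0 : 0 < q) (hq1 : q < 1) (hα : 0 < α) (h : ℕ) (hh : 0 < h)
    (hx : 0 ≤ x) (a b : ℕ) (ha : 0 < a) (hb : 0 < b) (m : ℕ) (i : ℕ) (hi : i ≤ m) :
    (m.choose i : ℝ) *
        (qnum (q ^ α) (a : ℝ)) ^ ((i : ℤ) - 1) * (qnum (q ^ α) (b : ℝ)) ^ (m - i) *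
        hqGenocchi (q ^ a) α h i ((b : ℝ) * x) *
        hqPowSum (q ^ b) α ((h : ℝ) + α * ((i : ℝ) - 1)) (m - i) a
      = qnum (q ^ a) 2 * ∑' n : ℕ, wfun q α x h a b m i n := by
  have hQ0 : (0 : ℝ) < q ^ α := Real.rpow_pos_of_pos hq0 α
  have hQ1 : q ^ α < 1 := Real.rpow_lt_one hq0.le hq1 hα
  rcases Nat.eq_zero_or_pos i with hi0 | hi1
  · subst hi0
    simp [hqGenocchi, wfun]
  -- i ≥ 1
  set Q : ℝ := q ^ α with hQdef
  set A : ℝ := qnum Q (a : ℝ) with hAdef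
  set B : ℝ := qnum Q (b : ℝ) with hBdef
  have hA0 : 0 < A := qnum_pos hQ0 hQ1 (by exact_mod_cast ha)
  have hB0 : 0 < B := qnum_pos hQ0 hQ1 (by exact_mod_cast hb)
  -- Genocchi series rewrite
  have hgen : hqGenocchi (q ^ a) α h i ((b : ℝ) * x)
      = (i : ℝ) * qnum (q ^ a) 2 *
          ((∑' n : ℕ, (-1 : ℝ) ^ n * q ^ (a * n * h) *
            (qnum Q (((a * n : ℕ) : ℝ) + ((a * b : ℕ) : ℝ) * x)) ^ (i - 1)) / A ^ (i - 1)) := by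
    unfold hqGenocchi
    rw [← tsum_div_const]
    congr 1
    apply tsum_congr
    intro n
    have e1 : qnum (((q ^ a : ℝ)) ^ α) ((n : ℝ) + (b : ℝ) * x)
        = qnum Q (((a * n : ℕ) : ℝ) + ((a * b : ℕ) : ℝ) * x) / A := by
      rw [qnum_natpow_rpow hq0 hq1 hα ha]
      congr 2
      push_cast
      ring
    rw [e1, div_pow]
    have e2 : ((q ^ a : ℝ)) ^ (n * h) = q ^ (a * n * h) := by
      rw [← pow_mul]
      ring_nf
    rw [e2]
    ring
  -- power-sum rewrite
  have hpow : hqPowSum (q ^ b) α ((h : ℝ) + α * ((i : ℝ) - 1)) (m - i) a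
      = (∑ j ∈ range a, (-1 : ℝ) ^ j * q ^ (b * j * h) *
          (Q ^ (((b * j : ℕ) : ℝ))) ^ (i - 1) * (qnum Q (((b * j : ℕ) : ℝ))) ^ (m - i))
          / B ^ (m - i) := by
    unfold hqPowSum
    rw [Finset.sum_div]
    apply Finset.sum_congr rfl
    intro j _
    have e1 : qnum (((q ^ b : ℝ)) ^ α) (j : ℝ) = qnum Q (((b * j : ℕ) : ℝ)) / B := by
      rw [qnum_natpow_rpow hq0 hq1 hα hb]
      congr 2
      push_cast
      ring
    have e2 : ((q ^ b : ℝ)) ^ ((j : ℝ) * ((h : ℝ) + α * ((i : ℝ) - 1)))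
        = q ^ (b * j * h) * (Q ^ (((b * j : ℕ) : ℝ))) ^ (i - 1) := by
      rw [natpow_rpow hq0.le]
      have e3 : (b : ℝ) * ((j : ℝ) * ((h : ℝ) + α * ((i : ℝ) - 1)))
          = ((b * j * h : ℕ) : ℝ) + α * (((b * j : ℕ) : ℝ) * ((i : ℝ) - 1)) := by
        push_cast
        ring
      rw [e3, Real.rpow_add hq0, Real.rpow_natCast, Real.rpow_mul hq0.le, ← hQdef]
      congr 1
      rw [Real.rpow_mul hQ0.le]
      have e4 : ((i : ℝ) - 1) = (((i - 1 : ℕ) : ℕ) : ℝ) := by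
        have : (1 : ℕ) ≤ i := hi1
        push_cast [Nat.cast_sub this]
        ring
      rw [e4, Real.rpow_natCast]
    rw [e1, e2, div_pow]
    ring
  rw [hgen, hpow]
  -- cancel A and B powers
  have hzpow : A ^ ((i : ℤ) - 1) = A ^ (i - 1 : ℕ) := by
    have : ((i : ℤ) - 1) = ((i - 1 : ℕ) : ℤ) := by omega
    rw [this, zpow_natCast]
  rw [hzpow]
  set T : ℝ := ∑' n : ℕ, (-1 : ℝ) ^ n * q ^ (a * n * h) *
      (qnum Q (((a * n : ℕ) : ℝ) + ((a * b : ℕ) : ℝ) * x)) ^ (i - 1) with hT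
  set S : ℝ := ∑ j ∈ range a, (-1 : ℝ) ^ j * q ^ (b * j * h) *
      (Q ^ (((b * j : ℕ) : ℝ))) ^ (i - 1) * (qnum Q (((b * j : ℕ) : ℝ))) ^ (m - i) with hS
  have hw : ∑' n : ℕ, wfun q α x h a b m i n = (m.choose i : ℝ) * i * (T * S) := by
    have hterm : ∀ n : ℕ, wfun q α x h a b m i n
        = (m.choose i : ℝ) * i *
            (((-1 : ℝ) ^ n * q ^ (a * n * h) *
              (qnum Q (((a * n : ℕ) : ℝ) + ((a * b : ℕ) : ℝ) * x)) ^ (i - 1)) * S) := by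
      intro n
      unfold wfun
      rw [hS, Finset.mul_sum, Finset.mul_sum]
      apply Finset.sum_congr rfl
      intro j _
      rw [← hQdef]
      ring
    rw [tsum_congr hterm, tsum_mul_left, hT, ← tsum_mul_right]
  rw [hw]
  field_simp

lemma claim2 (q α x : ℝ) (hq0 : 0 < q) (hq1 : q < 1) (hα : 0 < α) (h : ℕ) (hh : 0 < h)
    (hx : 0 ≤ x) (a b : ℕ) (ha : 0 < a) (hb : 0 < b) (m : ℕ) (i : ℕ) (hi : i ≤ m) :
    Summable (fun n : ℕ => wfun q α x h a b m i n) := by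
  have hQ0 : (0 : ℝ) < q ^ α := Real.rpow_pos_of_pos hq0 α
  have hQ1 : q ^ α < 1 := Real.rpow_lt_one hq0.le hq1 hα
  set Q : ℝ := q ^ α with hQdef
  set K : ℝ := max 1 (1 / (1 - Q)) with hK
  have hK1 : (1 : ℝ) ≤ K := le_max_left _ _
  have hK0 : (0 : ℝ) ≤ K := by linarith
  set r : ℝ := q ^ (a * h) with hr
  have hr0 : 0 ≤ r := pow_nonneg hq0.le _
  have hr1 : r < 1 := pow_lt_one₀ hq0.le hq1 (by positivity)
  apply summable_bd hr0 hr1 (C := (a : ℝ) * ((m.choose i : ℝ) * i * K ^ m * K ^ m))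
  intro n
  have hbound : ∀ j ∈ range a,
      |(m.choose i : ℝ) * i * (-1 : ℝ) ^ (n + j) * q ^ ((a * n + b * j) * h) *
        (Q ^ (((b * j : ℕ) : ℝ)) *
          qnum Q (((a * n : ℕ) : ℝ) + ((a * b : ℕ) : ℝ) * x)) ^ (i - 1) *
        (qnum Q (((b * j : ℕ) : ℝ))) ^ (m - i)|
      ≤ (m.choose i : ℝ) * i * K ^ m * K ^ m * r ^ n := by
    intro j _
    have hX0 : 0 ≤ Q ^ (((b * j : ℕ) : ℝ)) * qnum Q (((a * n : ℕ) : ℝ) + ((a * b : ℕ) : ℝ) * x) := by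
      apply mul_nonneg (Real.rpow_nonneg hQ0.le _)
      exact qnum_nonneg hQ0 hQ1 (by positivity)
    have hXK : Q ^ (((b * j : ℕ) : ℝ)) * qnum Q (((a * n : ℕ) : ℝ) + ((a * b : ℕ) : ℝ) * x) ≤ K := by
      calc Q ^ (((b * j : ℕ) : ℝ)) * qnum Q (((a * n : ℕ) : ℝ) + ((a * b : ℕ) : ℝ) * x)
          ≤ 1 * (1 / (1 - Q)) := by
            apply mul_le_mul (Real.rpow_le_one hQ0.le hQ1.le (by positivity))
              (qnum_le hQ0 hQ1) (qnum_nonneg hQ0 hQ1 (by positivity)) zero_le_one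
        _ ≤ K := by rw [one_mul]; exact le_max_right _ _
    have hY0 : 0 ≤ qnum Q (((b * j : ℕ) : ℝ)) := qnum_nonneg hQ0 hQ1 (by positivity)
    have hYK : qnum Q (((b * j : ℕ) : ℝ)) ≤ K := (qnum_le hQ0 hQ1).trans (le_max_right _ _)
    have hqr : q ^ ((a * n + b * j) * h) ≤ r ^ n := by
      rw [hr, ← pow_mul]
      apply pow_le_pow_of_le_one hq0.le hq1.le
      calc a * h * n = a * n * h := by ring
        _ ≤ (a * n + b * j) * h := Nat.mul_le_mul_right h (Nat.le_add_right _ _)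
    have habs : |(m.choose i : ℝ) * i * (-1 : ℝ) ^ (n + j) * q ^ ((a * n + b * j) * h) *
        (Q ^ (((b * j : ℕ) : ℝ)) *
          qnum Q (((a * n : ℕ) : ℝ) + ((a * b : ℕ) : ℝ) * x)) ^ (i - 1) *
        (qnum Q (((b * j : ℕ) : ℝ))) ^ (m - i)|
        = (m.choose i : ℝ) * i * q ^ ((a * n + b * j) * h) *
          (Q ^ (((b * j : ℕ) : ℝ)) *
            qnum Q (((a * n : ℕ) : ℝ) + ((a * b : ℕ) : ℝ) * x)) ^ (i - 1) *
          (qnum Q (((b * j : ℕ) : ℝ))) ^ (m - i) := by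
      rw [abs_mul, abs_mul, abs_mul, abs_mul, abs_pow, abs_neg, abs_one, one_pow, mul_one,
        abs_mul, Nat.abs_cast, Nat.abs_cast,
        abs_of_nonneg (pow_nonneg hq0.le _), abs_of_nonneg (pow_nonneg hX0 _),
        abs_of_nonneg (pow_nonneg hY0 _)]
    rw [habs]
    calc (m.choose i : ℝ) * i * q ^ ((a * n + b * j) * h) *
          (Q ^ (((b * j : ℕ) : ℝ)) *
            qnum Q (((a * n : ℕ) : ℝ) + ((a * b : ℕ) : ℝ) * x)) ^ (i - 1) *
          (qnum Q (((b * j : ℕ) : ℝ))) ^ (m - i)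
        ≤ (m.choose i : ℝ) * i * r ^ n * K ^ m * K ^ m := by
          have h1 : (Q ^ (((b * j : ℕ) : ℝ)) *
              qnum Q (((a * n : ℕ) : ℝ) + ((a * b : ℕ) : ℝ) * x)) ^ (i - 1) ≤ K ^ m :=
            (pow_le_pow_left₀ hX0 hXK _).trans (pow_le_pow_right₀ hK1 (by omega))
          have h2 : (qnum Q (((b * j : ℕ) : ℝ))) ^ (m - i) ≤ K ^ m :=
            (pow_le_pow_left₀ hY0 hYK _).trans (pow_le_pow_right₀ hK1 (by omega))
          have c0 : (0:ℝ) ≤ (m.choose i : ℝ) * i := by positivity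
          have hstep := mul_le_mul (mul_le_mul (mul_le_mul_of_nonneg_left hqr c0) h1
            (pow_nonneg hX0 _) (by positivity)) h2 (pow_nonneg hY0 _) (by positivity)
          calc _ ≤ (m.choose i : ℝ) * ↑i * r ^ n * K ^ m * K ^ m := hstep
            _ = _ := by ring
      _ = (m.choose i : ℝ) * i * K ^ m * K ^ m * r ^ n := by ring
  calc |wfun q α x h a b m i n|
      ≤ ∑ j ∈ range a, (m.choose i : ℝ) * i * K ^ m * K ^ m * r ^ n :=
        (Finset.abs_sum_le_sum_abs _ _).trans (Finset.sum_le_sum hbound)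
    _ = (a : ℝ) * ((m.choose i : ℝ) * i * K ^ m * K ^ m) * r ^ n := by
        rw [Finset.sum_const, Finset.card_range, nsmul_eq_mul]
        ring

lemma divmod_symm (n : ℕ) [NeZero n] (p : ℕ × Fin n) :
    (Nat.divModEquiv n).symm p = p.1 * n + p.2 := by
  simp [Nat.divModEquiv]

lemma claim3 (q α x : ℝ) (hq0 : 0 < q) (hq1 : q < 1) (hα : 0 < α) (h : ℕ)
    (a b : ℕ) (m : ℕ) (n : ℕ) :
    ∑ i ∈ range (m + 1), wfun q α x h a b m i n = (m : ℝ) * gfun q α x h a b m n := by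
  have hQ0 : (0 : ℝ) < q ^ α := Real.rpow_pos_of_pos hq0 α
  unfold wfun gfun
  rw [Finset.sum_comm, Finset.mul_sum]
  apply Finset.sum_congr rfl
  intro j _
  set Q : ℝ := q ^ α with hQdef
  set X : ℝ := Q ^ (((b * j : ℕ) : ℝ)) * qnum Q (((a * n : ℕ) : ℝ) + ((a * b : ℕ) : ℝ) * x)
    with hX
  set Y : ℝ := qnum Q (((b * j : ℕ) : ℝ)) with hY
  have e1 : ∀ i ∈ range (m + 1),
      (m.choose i : ℝ) * i * (-1 : ℝ) ^ (n + j) * q ^ ((a * n + b * j) * h) * X ^ (i - 1) *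
        Y ^ (m - i)
      = ((-1 : ℝ) ^ (n + j) * q ^ ((a * n + b * j) * h)) *
          ((m.choose i : ℝ) * i * X ^ (i - 1) * Y ^ (m - i)) := by
    intro i _
    ring
  rw [Finset.sum_congr rfl e1, ← Finset.mul_sum, binom_deriv]
  have e2 : X + Y = qnum Q (((a * n + b * j : ℕ) : ℝ) + ((a * b : ℕ) : ℝ) * x) := by
    rw [hX, hY]
    have := qnum_add hQ0 (((b * j : ℕ) : ℝ)) (((a * n : ℕ) : ℝ) + ((a * b : ℕ) : ℝ) * x)
    have harg : ((b * j : ℕ) : ℝ) + (((a * n : ℕ) : ℝ) + ((a * b : ℕ) : ℝ) * x)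
        = ((a * n + b * j : ℕ) : ℝ) + ((a * b : ℕ) : ℝ) * x := by
      push_cast
      ring
    rw [harg] at this
    rw [this]
    ring
  rw [e2]
  ring

lemma claim4 (q α x : ℝ) (hq0 : 0 < q) (hq1 : q < 1) (hα : 0 < α) (h : ℕ) (hh : 0 < h)
    (hx : 0 ≤ x) (a b : ℕ) (ha : 0 < a) (hb : 0 < b) (hbo : Odd b) (m : ℕ) (hm : 0 < m) :
    ∑' n : ℕ, gfun q α x h a b m n
      = ∑' t : ℕ, ∑ u ∈ range b, ∑ v ∈ range a,
          (-1 : ℝ) ^ (t + u + v) * q ^ ((a * b * t + a * u + b * v) * h) *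
            (qnum (q ^ α) (((a * b * t + a * u + b * v : ℕ) : ℝ) + ((a * b : ℕ) : ℝ) * x)) ^
              (m - 1) := by
  haveI : NeZero b := ⟨hb.ne'⟩
  have hGsum : Summable (gfun q α x h a b m) := by
    have h1 : Summable (fun n => ∑ i ∈ range (m + 1), wfun q α x h a b m i n) :=
      summable_sum (fun i hi => claim2 q α x hq0 hq1 hα h hh hx a b ha hb m i
        (Finset.mem_range_succ_iff.mp hi))
    apply (h1.mul_left ((m : ℝ)⁻¹)).congr
    intro n
    rw [claim3 q α x hq0 hq1 hα h a b m n, ← mul_assoc, inv_mul_cancel₀ (by positivity), one_mul]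
  have hGsum2 : Summable (fun p : ℕ × Fin b => gfun q α x h a b m (p.1 * b + p.2)) := by
    apply ((Nat.divModEquiv b).symm.summable_iff.mpr hGsum).congr
    intro p
    rw [Function.comp_apply, divmod_symm]
  calc ∑' n : ℕ, gfun q α x h a b m n
      = ∑' p : ℕ × Fin b, gfun q α x h a b m ((Nat.divModEquiv b).symm p) :=
        ((Nat.divModEquiv b).symm.tsum_eq _).symm
    _ = ∑' p : ℕ × Fin b, gfun q α x h a b m (p.1 * b + p.2) :=
        tsum_congr fun p => by rw [divmod_symm]
    _ = ∑' t : ℕ, ∑' u : Fin b, gfun q α x h a b m (t * b + u) :=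
        Summable.tsum_prod' hGsum2 (fun t => Summable.of_finite)
    _ = ∑' t : ℕ, ∑ u ∈ range b, gfun q α x h a b m (t * b + u) := by
        apply tsum_congr
        intro t
        rw [tsum_fintype, Fin.sum_univ_eq_sum_range (fun u => gfun q α x h a b m (t * b + u)) b]
    _ = _ := by
        apply tsum_congr
        intro t
        apply Finset.sum_congr rfl
        intro u _
        unfold gfun
        apply Finset.sum_congr rfl
        intro v _
        have hsgn : (-1 : ℝ) ^ (t * b + u + v) = (-1 : ℝ) ^ (t + u + v) := by
          rw [pow_add, pow_add, pow_add, pow_add, mul_comm t b, pow_mul, hbo.neg_one_pow]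
        rw [show a * (t * b + u) + b * v = a * b * t + a * u + b * v from by ring, hsgn]

lemma key (q α x : ℝ) (hq0 : 0 < q) (hq1 : q < 1) (hα : 0 < α) (h : ℕ) (hh : 0 < h)
    (hx : 0 ≤ x) (a b : ℕ) (ha : 0 < a) (hb : 0 < b) (hbo : Odd b) (m : ℕ) (hm : 0 < m) :
    qnum (q ^ b) 2 *
        ∑ i ∈ Finset.range (m + 1), (m.choose i : ℝ) *
          (qnum (q ^ α) (a : ℝ)) ^ ((i : ℤ) - 1) * (qnum (q ^ α) (b : ℝ)) ^ (m - i) *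
          hqGenocchi (q ^ a) α h i ((b : ℝ) * x) *
          hqPowSum (q ^ b) α ((h : ℝ) + α * ((i : ℝ) - 1)) (m - i) a
      = qnum (q ^ a) 2 * qnum (q ^ b) 2 * m *
        ∑' t : ℕ, ∑ u ∈ range b, ∑ v ∈ range a,
          (-1 : ℝ) ^ (t + u + v) * q ^ ((a * b * t + a * u + b * v) * h) *
            (qnum (q ^ α) (((a * b * t + a * u + b * v : ℕ) : ℝ) + ((a * b : ℕ) : ℝ) * x)) ^
              (m - 1) := by
  have hstep : ∑ i ∈ Finset.range (m + 1), (m.choose i : ℝ) *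
          (qnum (q ^ α) (a : ℝ)) ^ ((i : ℤ) - 1) * (qnum (q ^ α) (b : ℝ)) ^ (m - i) *
          hqGenocchi (q ^ a) α h i ((b : ℝ) * x) *
          hqPowSum (q ^ b) α ((h : ℝ) + α * ((i : ℝ) - 1)) (m - i) a
      = qnum (q ^ a) 2 * ((m : ℝ) * ∑' n : ℕ, gfun q α x h a b m n) := by
    calc ∑ i ∈ Finset.range (m + 1), (m.choose i : ℝ) *
          (qnum (q ^ α) (a : ℝ)) ^ ((i : ℤ) - 1) * (qnum (q ^ α) (b : ℝ)) ^ (m - i) *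
          hqGenocchi (q ^ a) α h i ((b : ℝ) * x) *
          hqPowSum (q ^ b) α ((h : ℝ) + α * ((i : ℝ) - 1)) (m - i) a
        = ∑ i ∈ Finset.range (m + 1), qnum (q ^ a) 2 * ∑' n : ℕ, wfun q α x h a b m i n :=
          Finset.sum_congr rfl fun i hi => claim1 q α x hq0 hq1 hα h hh hx a b ha hb m i
            (Finset.mem_range_succ_iff.mp hi)
      _ = qnum (q ^ a) 2 * ∑ i ∈ Finset.range (m + 1), ∑' n : ℕ, wfun q α x h a b m i n :=
          (Finset.mul_sum _ _ _).symm
      _ = qnum (q ^ a) 2 * ∑' n : ℕ, ∑ i ∈ Finset.range (m + 1), wfun q α x h a b m i n := by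
          rw [Summable.tsum_finsetSum (fun i hi => claim2 q α x hq0 hq1 hα h hh hx a b ha hb m i
            (Finset.mem_range_succ_iff.mp hi))]
      _ = qnum (q ^ a) 2 * ∑' n : ℕ, (m : ℝ) * gfun q α x h a b m n := by
          rw [tsum_congr (fun n => claim3 q α x hq0 hq1 hα h a b m n)]
      _ = qnum (q ^ a) 2 * ((m : ℝ) * ∑' n : ℕ, gfun q α x h a b m n) := by
          rw [tsum_mul_left]
  rw [hstep, claim4 q α x hq0 hq1 hα h hh hx a b ha hb hbo m hm]
  ring

theorem stmt8 (q α x : ℝ) (hq0 : 0 < q) (hq1 : q < 1) (hα : 0 < α) (h : ℕ) (hh : 0 < h)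
    (hx : 0 ≤ x) (a b : ℕ) (ha : 0 < a) (hb : 0 < b) (hao : Odd a) (hbo : Odd b)
    (m : ℕ) (hm : 0 < m) :
    qnum (q ^ b) 2 *
        ∑ i ∈ Finset.range (m + 1), (m.choose i : ℝ) *
          (qnum (q ^ α) (a : ℝ)) ^ ((i : ℤ) - 1) * (qnum (q ^ α) (b : ℝ)) ^ (m - i) *
          hqGenocchi (q ^ a) α h i ((b : ℝ) * x) *
          hqPowSum (q ^ b) α ((h : ℝ) + α * ((i : ℝ) - 1)) (m - i) a =
      qnum (q ^ a) 2 *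
        ∑ i ∈ Finset.range (m + 1), (m.choose i : ℝ) *
          (qnum (q ^ α) (b : ℝ)) ^ ((i : ℤ) - 1) * (qnum (q ^ α) (a : ℝ)) ^ (m - i) *
          hqGenocchi (q ^ b) α h i ((a : ℝ) * x) *
          hqPowSum (q ^ a) α ((h : ℝ) + α * ((i : ℝ) - 1)) (m - i) b := by
  rw [key q α x hq0 hq1 hα h hh hx a b ha hb hbo m hm,
    key q α x hq0 hq1 hα h hh hx b a hb ha hao m hm]
  have hts : ∑' t : ℕ, ∑ u ∈ range a, ∑ v ∈ range b,
        (-1 : ℝ) ^ (t + u + v) * q ^ ((b * a * t + b * u + a * v) * h) *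
          (qnum (q ^ α) (((b * a * t + b * u + a * v : ℕ) : ℝ) + ((b * a : ℕ) : ℝ) * x)) ^
            (m - 1)
      = ∑' t : ℕ, ∑ u ∈ range b, ∑ v ∈ range a,
        (-1 : ℝ) ^ (t + u + v) * q ^ ((a * b * t + a * u + b * v) * h) *
          (qnum (q ^ α) (((a * b * t + a * u + b * v : ℕ) : ℝ) + ((a * b : ℕ) : ℝ) * x)) ^
            (m - 1) := by
    apply tsum_congr
    intro t
    rw [Finset.sum_comm]
    apply Finset.sum_congr rfl
    intro u _
    apply Finset.sum_congr rfl
    intro v _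
    rw [show b * a * t + b * v + a * u = a * b * t + a * u + b * v from by ring,
      show b * a = a * b from by ring, show t + v + u = t + u + v from by ring]
  rw [hts]
  ring
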